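/- For a basic exponential sum μ on ℂⁿ there exist c₁, c₂ > 0 such that |μ(p)|_p + |dμ(p)|_p ≥ c₂ for all p outside the c₁-neighborhood U_{c₁}(Γ^{(n−1)}) of the (n−1)-skeleton. In other words, away from the (n−1)-skeleton, μ has no near-critical near-zeros: the C¹-norm |μ(p)|_{C¹_p} := |μ(p)|_p + |dμ(p)|_p is bounded below. -/

import Mathlib

open MeasureTheory

noncomputable section

/-- `ℂⁿ` with its Euclidean (Hermitian) norm. -/
abbrev ESp (n : ℕ) := EuclideanSpace ℂ (Fin n)

/-- The bilinear pairing `m · z = Σ m_k z_k`. -/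
def edot {n : ℕ} (m z : ESp n) : ℂ := ∑ k, m k * z k

variable {n l : ℕ}

/-- The exponential sum `μ(z) = Σ_j e^{α_j + m_j · z}`. -/
def expSum (m : Fin (l+1) → ESp n) (α : Fin (l+1) → ℂ) (z : ESp n) : ℂ :=
  ∑ j, Complex.exp (α j + edot (m j) z)

/-- `b(z) = max_j Re(α_j + m_j · z)`. -/
def bfun (m : Fin (l+1) → ESp n) (α : Fin (l+1) → ℂ) (z : ESp n) : ℝ :=
  Finset.univ.sup' Finset.univ_nonempty fun j => (α j + edot (m j) z).re

/-- The set `I_z` of indices attaining the maximum `b(z)`. -/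
def Iset (m : Fin (l+1) → ESp n) (α : Fin (l+1) → ℂ) (z : ESp n) : Set (Fin (l+1)) :=
  {i | (α i + edot (m i) z).re = bfun m α z}

/-- The set `I_{z,c}` of indices within `c` of the maximum `b(z)`. -/
def IsetC (m : Fin (l+1) → ESp n) (α : Fin (l+1) → ℂ) (z : ESp n) (c : ℝ) :
    Set (Fin (l+1)) :=
  {i | bfun m α z - c < (α i + edot (m i) z).re}

/-- The `k`-skeleton `Γ^{(k)}`: points where the real affine span of the maximizing
exponents has dimension `≥ 2n − k`. -/
def skel (m : Fin (l+1) → ESp n) (α : Fin (l+1) → ℂ) (k : ℕ) : Set (ESp n) :=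
  {z | 2*n - k ≤ Module.finrank ℝ (affineSpan ℝ (m '' Iset m α z)).direction}

/-- The relaxed neighborhood `U_c(Γ^{(k)})`, defined via near-maximizing exponents. -/
def Uskel (m : Fin (l+1) → ESp n) (α : Fin (l+1) → ℂ) (c : ℝ) (k : ℕ) : Set (ESp n) :=
  {z | 2*n - k ≤ Module.finrank ℝ (affineSpan ℝ (m '' IsetC m α z c)).direction}

/-- `{m_i}_{i∈s}` is the vertex set of a totally real non-degenerate simplex: for any base
vertex, the edge vectors together with their `J`-images are `ℝ`-linearly independent. -/
def TotallyRealSet (m : Fin (l+1) → ESp n) (s : Set (Fin (l+1))) : Prop :=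
  ∀ i₀ ∈ s, LinearIndependent ℝ
    fun q : {i : Fin (l+1) // i ∈ s ∧ i ≠ i₀} × Bool =>
      if q.2 then Complex.I • (m q.1.1 - m i₀) else m q.1.1 - m i₀

/-- `μ` is a basic exponential sum. -/
def IsBasic (m : Fin (l+1) → ESp n) (α : Fin (l+1) → ℂ) : Prop :=
  ∀ c₁ > (0:ℝ), ∃ c₂ > (0:ℝ), ∀ k : ℕ, n ≤ k → k ≤ 2*n →
    ∀ z ∈ skel m α k \ Uskel m α c₂ (k-1),
      IsetC m α z c₁ = Iset m α z ∧ TotallyRealSet m (Iset m α z) ∧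
        (Iset m α z).ncard = 2*n + 1 - k

/-- `μ` is strictly basic: basic, and the vertex sets of the simplices with at most `n`
vertices arising from maximizing exponents are `ℂ`-linearly independent. -/
def IsStrictlyBasic (m : Fin (l+1) → ESp n) (α : Fin (l+1) → ℂ) : Prop :=
  IsBasic m α ∧ ∀ z : ESp n, (Iset m α z).ncard ≤ n →
    LinearIndependent ℂ fun i : Iset m α z => m i

/-- The complex gradient of the exponential sum: `(dμ)_k = Σ_j e^{α_j + m_j·z} m_{j,k}`. -/
def gradExpSum (m : Fin (l+1) → ESp n) (α : Fin (l+1) → ℂ) (z : ESp n) : ESp n :=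
  WithLp.toLp 2 fun k => ∑ j, Complex.exp (α j + edot (m j) z) * m j k

/-- The critical set of the exponential sum. -/
def critSet (m : Fin (l+1) → ESp n) (α : Fin (l+1) → ℂ) : Set (ESp n) :=
  {z | gradExpSum m α z = 0}

end


set_option synthInstance.maxHeartbeats 1000000
set_option maxHeartbeats 4000000
set_option linter.unusedVariables false

noncomputable section
namespace Stmt12Aux

lemma edot_add {n : ℕ} (v z w : ESp n) : edot v (z + w) = edot v z + edot v w := by
  simp [edot, mul_add, Finset.sum_add_distrib]

lemma edot_rsmul {n : ℕ} (v w : ESp n) (t : ℝ) : edot v (t • w) = (t:ℂ) * edot v w := by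
  simp only [edot, Finset.mul_sum]
  congr 1; funext k
  have : (t • w) k = (t:ℂ) * w k := by simp [Complex.real_smul]
  rw [this]; ring

lemma edot_sub_left {n : ℕ} (a b w : ESp n) : edot (a - b) w = edot a w - edot b w := by
  simp [edot, sub_mul, Finset.sum_sub_distrib]

/-- conjugation as an ℝ-linear map -/
def cj {n : ℕ} : ESp n →ₗ[ℝ] ESp n where
  toFun v := WithLp.toLp 2 fun k => (starRingEnd ℂ) (v k)
  map_add' a b := by ext k; simp
  map_smul' t a := by ext k; simp [Complex.real_smul]

lemma cj_cj {n : ℕ} (v : ESp n) : cj (cj v) = v := by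
  ext k; simp [cj]

lemma edot_eq_inner {n : ℕ} (v w : ESp n) : edot v w = @inner ℂ _ _ (cj v) w := by
  simp [edot, PiLp.inner_apply, RCLike.inner_apply, cj, mul_comm]

lemma abs_edot_le {n : ℕ} (v w : ESp n) : ‖edot v w‖ ≤ ‖v‖ * ‖w‖ := by
  rw [edot_eq_inner]
  have h1 : ‖cj v‖ = ‖v‖ := by simp [EuclideanSpace.norm_eq, cj]
  calc ‖@inner ℂ _ _ (cj v) w‖ = ‖@inner ℂ _ _ (cj v) w‖ := rfl
    _ ≤ ‖cj v‖ * ‖w‖ := norm_inner_le_norm _ _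
    _ = ‖v‖ * ‖w‖ := by rw [h1]

lemma antilip {E : Type*} [NormedAddCommGroup E] [NormedSpace ℝ E]
    [FiniteDimensional ℝ E] {ι : Type*} [Fintype ι] (F : ι → E)
    (hF : LinearIndependent ℝ F) :
    ∃ σ > (0:ℝ), ∀ c : ι → ℝ, ∀ i, σ * ‖c i‖ ≤ ‖∑ j, c j • F j‖ := by
  classical
  let T : (ι → ℝ) →ₗ[ℝ] E :=
    { toFun := fun c => ∑ j, c j • F j
      map_add' := by intro a b; simp [add_smul, Finset.sum_add_distrib]
      map_smul' := by intro t a; simp [smul_smul, Finset.smul_sum] }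
  have hinj : Function.Injective T := by
    rw [← LinearMap.ker_eq_bot, Submodule.eq_bot_iff]
    intro c hc
    have h0 : ∑ j, c j • F j = 0 := hc
    have := Fintype.linearIndependent_iff.mp hF c h0
    funext i; exact this i
  let e := LinearEquiv.ofInjective T hinj
  let ce := e.toContinuousLinearEquiv
  set N : ℝ := ‖(ce.symm : LinearMap.range T →L[ℝ] (ι → ℝ))‖ with hN
  have hN0 : 0 ≤ N := by
    rw [hN]; exact norm_nonneg ((ce.symm : LinearMap.range T →L[ℝ] (ι → ℝ)))
  refine ⟨(N+1)⁻¹, by positivity, ?_⟩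
  intro c i
  have h1 : ‖c i‖ ≤ ‖c‖ := norm_le_pi_norm c i
  have h2 : ‖c‖ ≤ N * ‖ce c‖ := by
    have hcc : c = ce.symm (ce c) := (ce.symm_apply_apply c).symm
    calc ‖c‖ = ‖ce.symm (ce c)‖ := by rw [← hcc]
      _ ≤ N * ‖ce c‖ := (ce.symm : LinearMap.range T →L[ℝ] (ι → ℝ)).le_opNorm _
  have h3 : ‖(ce c : E)‖ = ‖∑ j, c j • F j‖ := by
    have hce : (ce c : E) = T c := by
      have h4 : ce c = e c := rfl
      rw [h4]; rfl
    rw [hce]; rfl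
  have h5 : ‖ce c‖ = ‖∑ j, c j • F j‖ := by rw [← h3]; rfl
  rw [h5] at h2
  have h6 : ‖c i‖ ≤ N * ‖∑ j, c j • F j‖ := le_trans h1 h2
  rw [inv_mul_le_iff₀ (by positivity)]
  nlinarith [norm_nonneg (∑ j, c j • F j)]

lemma exists_lift {n : ℕ} {ι : Type*} (V : ι → ESp n) (T : Set ι) (x : ESp n)
    (hx : x ∉ Submodule.span ℝ (V '' T)) :
    ∃ w : ESp n, (∀ i ∈ T, (edot (V i) w).re = 0) ∧ (edot x w).re = 1 := by
  classical
  letI : InnerProductSpace ℝ (ESp n) := InnerProductSpace.rclikeToReal ℂ (ESp n)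
  set U : Submodule ℝ (ESp n) := Submodule.span ℝ (cj '' (V '' T)) with hU
  have hxU : cj x ∉ U := by
    intro hmem
    apply hx
    have h1 : cj (cj x) ∈ U.map cj := Submodule.mem_map_of_mem hmem
    rw [cj_cj] at h1
    rw [hU, Submodule.map_span, Set.image_image] at h1
    have h2 : (fun v => cj (cj v)) '' (V '' T) = V '' T := by
      have : (fun v : ESp n => cj (cj v)) = id := by funext v; simp [cj_cj]
      rw [this, Set.image_id]
    rwa [h2] at h1
  have hfd : FiniteDimensional ℝ (ESp n) := inferInstance
  set v : ESp n := cj x - (U.orthogonalProjectionOnto (cj x) : ESp n) with hv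
  have hvU : v ∈ Uᗮ := Submodule.sub_starProjection_mem_orthogonal (K := U) (cj x)
  have hvne : v ≠ 0 := by
    intro h0
    apply hxU
    have : cj x = (U.orthogonalProjectionOnto (cj x) : ESp n) := by
      have := sub_eq_zero.mp (hv ▸ h0)
      exact this
    rw [this]; exact (U.orthogonalProjectionOnto (cj x)).2
  have hnv : (0:ℝ) < ‖v‖^2 := by have := norm_pos_iff.mpr hvne; positivity
  refine ⟨(‖v‖^2)⁻¹ • v, ?_, ?_⟩
  · intro i hi
    have hmem : cj (V i) ∈ U := Submodule.subset_span ⟨V i, ⟨i, hi, rfl⟩, rfl⟩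
    have h3 : @inner ℝ _ _ (cj (V i)) v = 0 := (Submodule.mem_orthogonal U v).mp hvU _ hmem
    have h4 : (edot (V i) ((‖v‖^2)⁻¹ • v)).re = @inner ℝ _ _ (cj (V i)) ((‖v‖^2)⁻¹ • v) := by
      rw [edot_eq_inner]; rfl
    rw [h4, real_inner_smul_right, h3, mul_zero]
  · have h5 : @inner ℝ _ _ (cj x) v = ‖v‖^2 := by
      have hp : (U.orthogonalProjectionOnto (cj x) : ESp n) ∈ U := (U.orthogonalProjectionOnto (cj x)).2
      have h6 : @inner ℝ _ _ ((U.orthogonalProjectionOnto (cj x) : ESp n)) v = 0 :=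
        (Submodule.mem_orthogonal U v).mp hvU _ hp
      have h7 : cj x = v + (U.orthogonalProjectionOnto (cj x) : ESp n) := by rw [hv]; abel
      rw [h7, inner_add_left, h6, add_zero, real_inner_self_eq_norm_sq]
    have h8 : (edot x ((‖v‖^2)⁻¹ • v)).re = @inner ℝ _ _ (cj x) ((‖v‖^2)⁻¹ • v) := by
      rw [edot_eq_inner]; rfl
    rw [h8, real_inner_smul_right, h5, inv_mul_cancel₀ (ne_of_gt hnv)]

lemma smul_decomp {n : ℕ} (u : ℂ) (v : ESp n) :
    u • v = u.re • v + u.im • (Complex.I • v) := by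
  have h1 : (u.re : ℂ) • v = u.re • v := by rw [← Complex.coe_smul]
  have h2 : (u.im : ℂ) • (Complex.I • v) = u.im • (Complex.I • v) := by
    rw [← Complex.coe_smul]
  rw [← h1, ← h2, smul_smul, ← add_smul]
  congr 1
  exact (Complex.re_add_im u).symm

lemma pigeon {l : ℕ} (r : Fin (l+1) → ℝ) (bb : ℝ) (lam : ℕ → ℝ)
    (hmono : Monotone lam) (hpos : 0 < lam 0)
    (htop : ∃ i₀, r i₀ = bb) (hle : ∀ i, r i ≤ bb) :
    ∃ j < l+1, ∀ i, ¬(bb - lam (j+1) < r i ∧ r i ≤ bb - lam j) := by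
  classical
  by_contra hcon
  push_neg at hcon
  choose F hF1 hF2 using hcon
  obtain ⟨i₀, hi₀⟩ := htop
  set G : Fin (l+1) → Fin (l+1) := fun j => F j.1 j.2 with hG
  have hinj : Function.Injective G := by
    intro a b hab
    by_contra hne
    rcases Nat.lt_or_ge a.1 b.1 with hlt | hge
    · have h1 : bb - lam (a.1+1) < r (G a) := hF1 a.1 a.2
      have h2 : r (G b) ≤ bb - lam b.1 := hF2 b.1 b.2
      rw [hab] at h1
      have : lam (a.1+1) ≤ lam b.1 := hmono hlt
      linarith
    · have hlt : b.1 < a.1 := by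
        rcases Nat.lt_or_ge b.1 a.1 with h | h
        · exact h
        · exact absurd (Fin.ext (le_antisymm h hge)) hne
      have h1 : bb - lam (b.1+1) < r (G b) := hF1 b.1 b.2
      have h2 : r (G a) ≤ bb - lam a.1 := hF2 a.1 a.2
      rw [← hab] at h1
      have : lam (b.1+1) ≤ lam a.1 := hmono hlt
      linarith
  have hmiss : ∀ j : Fin (l+1), G j ≠ i₀ := by
    intro j hj
    have h2 : r (G j) ≤ bb - lam j.1 := hF2 j.1 j.2
    rw [hj, hi₀] at h2
    have : lam 0 ≤ lam j.1 := hmono (Nat.zero_le _)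
    linarith
  have hsub : Finset.univ.image G ⊆ Finset.univ.erase i₀ := by
    intro x hx
    obtain ⟨j, _, rfl⟩ := Finset.mem_image.mp hx
    exact Finset.mem_erase.mpr ⟨hmiss j, Finset.mem_univ _⟩
  have hcard := Finset.card_le_card hsub
  rw [Finset.card_image_of_injective _ hinj,
    Finset.card_erase_of_mem (Finset.mem_univ _)] at hcard
  have h9 : (l+1) ≤ (l+1) - 1 := by simpa using hcard
  omega

end Stmt12Aux
end

open Stmt12Aux in
/-- For a basic exponential sum there are `c₁, c₂ > 0` with
`|μ(p)|_p + |dμ(p)|_p ≥ c₂` outside `U_{c₁}(Γ^{(n−1)})`. -/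
theorem stmt12 (n l : ℕ) (m : Fin (l+1) → ESp n) (α : Fin (l+1) → ℂ)
    (h : IsBasic m α) :
    ∃ c₁ > (0:ℝ), ∃ c₂ > (0:ℝ), ∀ p : ESp n, p ∉ Uskel m α c₁ (n-1) →
      c₂ ≤ Real.exp (-(bfun m α p)) *
        (‖expSum m α p‖ + ‖gradExpSum m α p‖) := by
  classical
  rcases Nat.eq_zero_or_pos n with hn0 | hn1
  · subst hn0
    refine ⟨1, one_pos, 1, one_pos, fun p hp => absurd ?_ hp⟩
    have : p ∈ Uskel m α 1 (0-1) := by simp [Uskel]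
    exact this
  -- ====================== n ≥ 1 ======================
  -- extract the scale function from basicness
  obtain ⟨f, hfpos, hfP⟩ : ∃ f : ℝ → ℝ, (∀ a, 0 < a → 0 < f a) ∧
      (∀ a, 0 < a → ∀ k : ℕ, n ≤ k → k ≤ 2*n →
        ∀ z ∈ skel m α k \ Uskel m α (f a) (k-1), IsetC m α z a = Iset m α z ∧
          TotallyRealSet m (Iset m α z) ∧ (Iset m α z).ncard = 2*n + 1 - k) := by
    choose g h1 h2 using h
    refine ⟨fun a => if ha : 0 < a then g a ha else 1, ?_, ?_⟩
    · intro a ha; simp only [dif_pos ha]; exact h1 a ha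
    · intro a ha; simp only [dif_pos ha]; exact h2 a ha
  -- bound on exponents
  obtain ⟨M, hM1, hMi⟩ : ∃ M : ℝ, 1 ≤ M ∧ ∀ i, ‖m i‖ ≤ M := by
    have h0 : (0:ℝ) ≤ ∑ i, ‖m i‖ := Finset.sum_nonneg fun i _ => norm_nonneg _
    refine ⟨1 + ∑ i, ‖m i‖, by linarith, fun i => ?_⟩
    have := Finset.single_le_sum (f := fun i => ‖m i‖) (fun i _ => norm_nonneg _)
      (Finset.mem_univ i)
    linarith
  -- uniform lifting vectors
  obtain ⟨K, hK1, wfun, hwK, hwspec⟩ : ∃ K : ℝ, 1 ≤ K ∧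
      ∃ wfun : Finset (Fin (l+1)) × Fin (l+1) × Fin (l+1) → ESp n,
        (∀ c, ‖wfun c‖ ≤ K) ∧
        ∀ c : Finset (Fin (l+1)) × Fin (l+1) × Fin (l+1),
          (m c.2.2 - m c.2.1) ∉
              Submodule.span ℝ ((fun i => m i - m c.2.1) '' (↑c.1 : Set (Fin (l+1)))) →
            (∀ i ∈ (↑c.1 : Set (Fin (l+1))), (edot (m i - m c.2.1) (wfun c)).re = 0) ∧
              (edot (m c.2.2 - m c.2.1) (wfun c)).re = 1 := by
    have hex : ∀ c : Finset (Fin (l+1)) × Fin (l+1) × Fin (l+1), ∃ w : ESp n,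
        (m c.2.2 - m c.2.1) ∉
            Submodule.span ℝ ((fun i => m i - m c.2.1) '' (↑c.1 : Set (Fin (l+1)))) →
          (∀ i ∈ (↑c.1 : Set (Fin (l+1))), (edot (m i - m c.2.1) w).re = 0) ∧
            (edot (m c.2.2 - m c.2.1) w).re = 1 := by
      intro c
      by_cases hc : (m c.2.2 - m c.2.1) ∉
          Submodule.span ℝ ((fun i => m i - m c.2.1) '' (↑c.1 : Set (Fin (l+1))))
      · obtain ⟨w, hw1, hw2⟩ := exists_lift (fun i => m i - m c.2.1)
          (↑c.1 : Set (Fin (l+1))) (m c.2.2 - m c.2.1) hc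
        exact ⟨w, fun _ => ⟨hw1, hw2⟩⟩
      · exact ⟨0, fun hcon => absurd hcon hc⟩
    choose wfun hwfun using hex
    have h0 : (0:ℝ) ≤ ∑ c, ‖wfun c‖ := Finset.sum_nonneg fun _ _ => norm_nonneg _
    refine ⟨1 + ∑ c, ‖wfun c‖, by linarith, wfun, fun c => ?_, hwfun⟩
    have := Finset.single_le_sum (f := fun c => ‖wfun c‖) (fun _ _ => norm_nonneg _)
      (Finset.mem_univ c)
    linarith
  -- uniform lower bound for totally real simplices
  obtain ⟨σ, hσpos, hσspec⟩ : ∃ σ : ℝ, 0 < σ ∧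
      ∀ (S : Finset (Fin (l+1))) (i₀ : Fin (l+1)),
        TotallyRealSet m (↑S : Set (Fin (l+1))) → i₀ ∈ S →
        ∀ c : {i : Fin (l+1) // i ∈ (↑S : Set (Fin (l+1))) ∧ i ≠ i₀} × Bool → ℝ, ∀ q,
          σ * ‖c q‖ ≤ ‖∑ j : {i : Fin (l+1) // i ∈ (↑S : Set (Fin (l+1))) ∧ i ≠ i₀} × Bool,
            c j • (if j.2 then Complex.I • (m j.1.1 - m i₀) else m j.1.1 - m i₀)‖ := by
    have hex : ∀ c : Finset (Fin (l+1)) × Fin (l+1), ∃ σc : ℝ, 0 < σc ∧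
        (TotallyRealSet m (↑c.1 : Set (Fin (l+1))) → c.2 ∈ c.1 →
          ∀ cc : {i : Fin (l+1) // i ∈ (↑c.1 : Set (Fin (l+1))) ∧ i ≠ c.2} × Bool → ℝ, ∀ q,
            σc * ‖cc q‖ ≤ ‖∑ j : {i : Fin (l+1) // i ∈ (↑c.1 : Set (Fin (l+1))) ∧ i ≠ c.2} × Bool,
              cc j • (if j.2 then Complex.I • (m j.1.1 - m c.2) else m j.1.1 - m c.2)‖) := by
      intro c
      by_cases hc : TotallyRealSet m (↑c.1 : Set (Fin (l+1))) ∧ c.2 ∈ c.1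
      · obtain ⟨σc, hσc, hspec⟩ := antilip _ (hc.1 c.2 hc.2)
        exact ⟨σc, hσc, fun _ _ => hspec⟩
      · refine ⟨1, one_pos, fun h1 h2 => absurd ⟨h1, h2⟩ hc⟩
    choose σf hσf hσfspec using hex
    refine ⟨Finset.univ.inf' Finset.univ_nonempty σf, ?_, ?_⟩
    · rw [Finset.lt_inf'_iff]
      intro c _; exact hσf c
    · intro S i₀ hTR hi₀ c q
      have h1 := hσfspec (S, i₀) hTR hi₀ c q
      calc Finset.univ.inf' Finset.univ_nonempty σf * ‖c q‖
          ≤ σf (S, i₀) * ‖c q‖ := by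
            apply mul_le_mul_of_nonneg_right _ (norm_nonneg _)
            exact Finset.inf'_le _ (Finset.mem_univ _)
        _ ≤ _ := h1
  -- remaining constants and scales
  set K₀ : ℝ := 1 + 2*(l+1)*(M+1)/σ with hK₀
  have hK₀1 : 1 ≤ K₀ := by
    rw [hK₀]
    have h0 : (0:ℝ) ≤ 2*(l+1)*(M+1) := by positivity
    have : 0 ≤ 2*(l+1)*(M+1)/σ := div_nonneg h0 hσpos.le
    linarith
  set lam0 : ℝ := max 1 (Real.log (2*K₀*(1+M)*(l+1))) with hlam0
  have hlam0pos : (0:ℝ) < lam0 := lt_of_lt_of_le one_pos (le_max_left _ _)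
  have hlam0exp : (l+1) * Real.exp (-lam0) * (1+M) * K₀ ≤ 1/2 := by
    have hX : (1:ℝ) ≤ 2*K₀*(1+M)*(l+1) := by
      have h1 : (1:ℝ) ≤ (1+M) := by linarith
      have h2 : (1:ℝ) ≤ ((l:ℝ)+1) := by
        have : (0:ℝ) ≤ (l:ℝ) := Nat.cast_nonneg l
        linarith
      have ha : (1:ℝ) ≤ 2*K₀ := by linarith
      have hb : (1:ℝ) ≤ 2*K₀*(1+M) := by nlinarith
      nlinarith
    have h3 : Real.exp (-lam0) ≤ (2*K₀*(1+M)*(l+1))⁻¹ := by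
      rw [Real.exp_neg]
      rw [inv_le_inv₀ (Real.exp_pos _) (by linarith)]
      calc (2*K₀*(1+M)*(l+1)) ≤ Real.exp (Real.log (2*K₀*(1+M)*(l+1))) := by
            rw [Real.exp_log (by linarith)]
        _ ≤ Real.exp lam0 := Real.exp_le_exp.mpr (le_max_right _ _)
    have h4 : (l+1) * Real.exp (-lam0) * (1+M) * K₀
        ≤ (l+1) * (2*K₀*(1+M)*(l+1))⁻¹ * (1+M) * K₀ := by
      have h5 : (0:ℝ) ≤ (l:ℝ)+1 := by positivity
      have h6 : (0:ℝ) ≤ (1+M) := by linarith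
      have h7 : (0:ℝ) ≤ K₀ := by linarith
      exact mul_le_mul_of_nonneg_right (mul_le_mul_of_nonneg_right
        (mul_le_mul_of_nonneg_left h3 h5) h6) h7
    have h8 : (l+1) * (2*K₀*(1+M)*(l+1))⁻¹ * (1+M) * K₀ = 1/2 := by
      field_simp
    rw [h8] at h4
    exact h4
  set gsc : ℝ → ℝ := fun x => 3*x + (4*M*K+4) * (f x + 1) with hgsc
  have hMK0 : (0:ℝ) < M*K := by nlinarith
  have hgx : ∀ x : ℝ, 0 < x → 0 < gsc x ∧ x < gsc x := by
    intro x hx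
    have hfx := hfpos x hx
    constructor
    · rw [hgsc]; dsimp only; nlinarith
    · rw [hgsc]; dsimp only; nlinarith
  have hit : ∀ (s : ℕ) (x : ℝ), 0 < x → 0 < gsc^[s] x ∧ x ≤ gsc^[s] x := by
    intro s
    induction s with
    | zero => intro x hx; simp [hx]
    | succ s ih =>
      intro x hx
      rw [Function.iterate_succ_apply']
      obtain ⟨h1, h2⟩ := ih x hx
      obtain ⟨h3, h4⟩ := hgx _ h1
      exact ⟨h3, by linarith⟩
  have hitmono : ∀ (a b : ℕ) (x : ℝ), 0 < x → a ≤ b → gsc^[a] x ≤ gsc^[b] x := by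
    intro a b x hx hab
    obtain ⟨k, rfl⟩ := Nat.exists_eq_add_of_le hab
    rw [Nat.add_comm a k, Function.iterate_add_apply]
    exact (hit k _ (hit a x hx).1).2
  set lam : ℕ → ℝ := fun j => gsc^[(l+3)*j] lam0 with hlam
  have hlampos : ∀ j, 0 < lam j := fun j => (hit _ _ hlam0pos).1
  have hlamge : ∀ j, lam0 ≤ lam j := fun j => (hit _ _ hlam0pos).2
  have hlammono : Monotone lam := by
    intro a b hab
    exact hitmono _ _ _ hlam0pos (Nat.mul_le_mul le_rfl hab)
  have hlamsucc : ∀ j, lam (j+1) = gsc^[l+3] (lam j) := by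
    intro j
    rw [hlam]
    simp only
    rw [show (l+3)*(j+1) = (l+3) + (l+3)*j by ring, Function.iterate_add_apply]
  -- final constants
  refine ⟨lam (l+1), hlampos _, (2*K₀)⁻¹, by positivity, ?_⟩
  intro p hp
  -- basic facts about bfun
  have hble : ∀ (i : Fin (l+1)) (z : ESp n), (α i + edot (m i) z).re ≤ bfun m α z :=
    fun i z => Finset.le_sup' (fun j => (α j + edot (m j) z).re) (Finset.mem_univ i)
  have hbex : ∀ z : ESp n, ∃ i, (α i + edot (m i) z).re = bfun m α z := by
    intro z
    obtain ⟨i, _, hi⟩ := Finset.exists_mem_eq_sup' Finset.univ_nonempty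
      (fun j => (α j + edot (m j) z).re)
    exact ⟨i, hi.symm⟩
  have hRshift : ∀ (i : Fin (l+1)) (z w : ESp n) (t : ℝ),
      (α i + edot (m i) (z + t • w)).re
        = (α i + edot (m i) z).re + t * (edot (m i) w).re := by
    intro i z w t
    rw [edot_add, edot_rsmul]
    simp [Complex.add_re, Complex.mul_re]
    ring
  -- the dimension bound from p ∉ Uskel
  have hpdim : Module.finrank ℝ (affineSpan ℝ (m '' IsetC m α p (lam (l+1)))).direction ≤ n := by
    by_contra hcon
    push_neg at hcon
    apply hp
    simp only [Uskel, Set.mem_setOf_eq]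
    omega
  obtain ⟨i₀, hi₀⟩ := hbex p
  -- choose the gap scale
  obtain ⟨j, hjl, hband⟩ := pigeon (fun i => (α i + edot (m i) p).re) (bfun m α p) lam
    hlammono (hlampos 0) ⟨i₀, hi₀⟩ (fun i => hble i p)
  set H : Set (Fin (l+1)) := IsetC m α p (lam j) with hH
  have hi₀H : i₀ ∈ H := by
    show bfun m α p - lam j < (α i₀ + edot (m i₀) p).re
    rw [hi₀]; linarith [hlampos j]
  have hTail : ∀ i ∉ H, (α i + edot (m i) p).re ≤ bfun m α p - lam (j+1) := by
    intro i hi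
    have h1 : ¬(bfun m α p - lam j < (α i + edot (m i) p).re) := hi
    have h2 := hband i
    push_neg at h1
    by_contra h3
    push_neg at h3
    exact h2 ⟨h3, h1⟩
  have hHC : H ⊆ IsetC m α p (lam (l+1)) := by
    intro i hi
    have h1 : bfun m α p - lam j < (α i + edot (m i) p).re := hi
    have h2 : lam j ≤ lam (l+1) := hlammono (by omega)
    show bfun m α p - lam (l+1) < (α i + edot (m i) p).re
    linarith
  have hdim : ∀ s : Set (Fin (l+1)), s ⊆ H →
      Module.finrank ℝ (affineSpan ℝ (m '' s)).direction ≤ n := by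
    intro s hs
    have h1 : affineSpan ℝ (m '' s) ≤ affineSpan ℝ (m '' IsetC m α p (lam (l+1))) :=
      affineSpan_mono ℝ (Set.image_mono (hs.trans hHC))
    have h2 := Submodule.finrank_mono (AffineSubspace.direction_le h1)
    omega
  -- the key induction
  have CORE : ∀ t s : ℕ, s + t = (l+1) + 1 → ∀ z : ESp n,
      (∀ i ∈ H, bfun m α z - gsc^[s] (lam j) < (α i + edot (m i) z).re) →
      (∀ i ∉ H, (α i + edot (m i) z).re
        ≤ bfun m α z - (lam (j+1) - 2*(gsc^[s] (lam j) - lam j))) →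
      s ≤ (Iset m α z).ncard →
      TotallyRealSet m H := by
    intro t
    induction t with
    | zero =>
      intro s hs z h1 h2 h3
      exfalso
      have hcard : (Iset m α z).ncard ≤ l+1 := by
        have := Set.ncard_le_ncard (Set.subset_univ (Iset m α z)) (Set.toFinite _)
        rwa [Set.ncard_univ, Nat.card_eq_fintype_card, Fintype.card_fin] at this
      omega
    | succ t ih =>
      intro s hs z h1 h2 h3
      set W : ℝ := gsc^[s] (lam j) with hW
      have hWpos : 0 < W := (hit s _ (hlampos j)).1
      have hWge : lam j ≤ W := (hit s _ (hlampos j)).2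
      have hfW : 0 < f W := hfpos _ hWpos
      have hsL : s ≤ l+1 := by omega
      have hexp : gsc W = 3*W + (4*M*K+4) * (f W + 1) := by rw [hgsc]
      have hIso : W + f W ≤ lam (j+1) - 2*(W - lam j) := by
        have hcount : gsc W ≤ lam (j+1) := by
          rw [hlamsucc j]
          have h4 : gsc^[s+1] (lam j) ≤ gsc^[l+3] (lam j) :=
            hitmono _ _ _ (hlampos j) (by omega)
          rwa [Function.iterate_succ_apply', ← hW] at h4
        nlinarith [hlampos j, mul_nonneg hMK0.le hfW.le]
      by_cases hincl : m '' (IsetC m α z (f W)) ⊆ ↑(affineSpan ℝ (m '' Iset m α z))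
      · -- exact-cluster case : apply basicness
        have hIsub : Iset m α z ⊆ H := by
          intro i hi
          by_contra hiH
          have h4 := h2 i hiH
          have h5 : (α i + edot (m i) z).re = bfun m α z := hi
          rw [h5] at h4
          linarith
        set d := Module.finrank ℝ (affineSpan ℝ (m '' Iset m α z)).direction with hd
        have hdn : d ≤ n := hdim _ hIsub
        have hIICsub : Iset m α z ⊆ IsetC m α z (f W) := by
          intro i hi
          have h5 : (α i + edot (m i) z).re = bfun m α z := hi
          show bfun m α z - f W < (α i + edot (m i) z).re
          rw [h5]; linarith
        have hspaneq : affineSpan ℝ (m '' IsetC m α z (f W))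
            = affineSpan ℝ (m '' Iset m α z) := by
          apply le_antisymm
          · exact affineSpan_le.mpr hincl
          · exact affineSpan_mono ℝ (Set.image_mono hIICsub)
        have hsk : z ∈ skel m α (2*n - d) := by
          simp only [skel, Set.mem_setOf_eq]
          omega
        have hUsk : z ∉ Uskel m α (f W) (2*n - d - 1) := by
          simp only [Uskel, Set.mem_setOf_eq]
          rw [hspaneq, ← hd]
          omega
        obtain ⟨hIC, hTR, -⟩ := hfP W hWpos (2*n - d) (by omega) (by omega) z ⟨hsk, hUsk⟩
        have hHsub : H ⊆ Iset m α z := by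
          intro i hi
          rw [← hIC]
          exact h1 i hi
        have hHeq : H = Iset m α z := Set.Subset.antisymm hHsub hIsub
        rw [hHeq]
        exact hTR
      · -- dimension-jump case : move to a richer tie and recurse
        obtain ⟨y, hy1, hy2⟩ := Set.not_subset.mp hincl
        obtain ⟨istar, histar, rfl⟩ := hy1
        obtain ⟨i0, hi0⟩ := hbex z
        have hi0mem : i0 ∈ Iset m α z := hi0
        have histar_not : istar ∉ Iset m α z := fun hmem =>
          hy2 (subset_affineSpan ℝ _ ⟨istar, hmem, rfl⟩)
        have hx : m istar - m i0 ∉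
            Submodule.span ℝ ((fun i => m i - m i0) '' (Iset m α z)) := by
          intro hmem
          apply hy2
          have hsp : Submodule.span ℝ ((fun i => m i - m i0) '' (Iset m α z))
              ≤ vectorSpan ℝ (m '' Iset m α z) := by
            rw [Submodule.span_le]
            rintro v ⟨i, hi, rfl⟩
            exact vsub_mem_vectorSpan ℝ ⟨i, hi, rfl⟩ ⟨i0, hi0mem, rfl⟩
          have hdir : m istar - m i0 ∈ (affineSpan ℝ (m '' Iset m α z)).direction := by
            rw [direction_affineSpan]
            exact hsp hmem
          have h6 := AffineSubspace.vadd_mem_of_mem_direction hdir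
            (subset_affineSpan ℝ _ ⟨i0, hi0mem, rfl⟩)
          simpa using h6
        set Tfin := (Set.toFinite (Iset m α z)).toFinset with hTfin
        have hTcoe : (↑Tfin : Set (Fin (l+1))) = Iset m α z := Set.Finite.coe_toFinset _
        obtain ⟨hw0, hw1⟩ := hwspec (Tfin, i0, istar) (by rw [hTcoe]; exact hx)
        set w := wfun (Tfin, i0, istar) with hwdef
        have hw0' : ∀ i ∈ Iset m α z, (edot (m i - m i0) w).re = 0 := by
          rw [← hTcoe]; exact hw0
        set c0 : ℝ := (edot (m i0) w).re with hc0
        have hsl : ∀ i, (edot (m i) w).re = c0 + (edot (m i - m i0) w).re := by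
          intro i
          rw [edot_sub_left, Complex.sub_re, hc0]
          ring
        set Tc := Finset.univ.filter (fun i => i ∉ Iset m α z) with hTc
        have hTcne : Tc.Nonempty := ⟨istar, by simp [hTc, histar_not]⟩
        set tfn : Fin (l+1) → ℝ := fun i =>
          if 0 < (edot (m i - m i0) w).re
          then (bfun m α z - (α i + edot (m i) z).re) / (edot (m i - m i0) w).re
          else (bfun m α z - (α istar + edot (m istar) z).re) + 1 with htfn
        set tstar := Tc.inf' hTcne tfn with htstar
        have hδpos : ∀ i ∈ Tc, 0 < bfun m α z - (α i + edot (m i) z).re := by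
          intro i hi
          have h5 := hble i z
          have h6 : i ∉ Iset m α z := by simpa [hTc] using hi
          have h7 : (α i + edot (m i) z).re ≠ bfun m α z := h6
          rcases lt_or_eq_of_le h5 with h8 | h8
          · linarith
          · exact absurd h8 h7
        have hδstar : 0 < bfun m α z - (α istar + edot (m istar) z).re :=
          hδpos istar (by simp [hTc, histar_not])
        have htpos : 0 < tstar := by
          rw [htstar, Finset.lt_inf'_iff]
          intro i hi
          by_cases hsli : 0 < (edot (m i - m i0) w).re
          · rw [htfn]; dsimp only; rw [if_pos hsli]
            exact div_pos (hδpos i hi) hsli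
          · rw [htfn]; dsimp only; rw [if_neg hsli]
            linarith
        have hslstar : (edot (m istar - m i0) w).re = 1 := hw1
        have htle : tstar ≤ bfun m α z - (α istar + edot (m istar) z).re := by
          have h7 := Finset.inf'_le tfn (show istar ∈ Tc by simp [hTc, histar_not])
          rw [htfn] at h7
          dsimp only at h7
          rw [hslstar, if_pos one_pos, div_one] at h7
          rw [htstar]
          exact h7
        have hδΦ : bfun m α z - (α istar + edot (m istar) z).re < f W := by
          have h8 : bfun m α z - f W < (α istar + edot (m istar) z).re := histar
          linarith
        have htfW : tstar < f W := lt_of_le_of_lt htle hδΦ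
        set z' : ESp n := z + tstar • w with hz'
        have hRs : ∀ i, (α i + edot (m i) z').re
            = (α i + edot (m i) z).re + tstar * (edot (m i) w).re := by
          intro i; rw [hz']; exact hRshift i z w tstar
        have hbz' : bfun m α z' = bfun m α z + tstar * c0 := by
          apply le_antisymm
          · refine Finset.sup'_le _ _ fun i _ => ?_
            rw [hRs i, hsl i]
            by_cases hiI : i ∈ Iset m α z
            · rw [hw0' i hiI]
              have h5 : (α i + edot (m i) z).re = bfun m α z := hiI
              rw [h5]
              exact le_of_eq (by ring)
            · have hi' : i ∈ Tc := by simp [hTc, hiI]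
              have hδ := hδpos i hi'
              by_cases hsli : 0 < (edot (m i - m i0) w).re
              · have h8 := Finset.inf'_le tfn hi'
                rw [htfn] at h8; dsimp only at h8; rw [if_pos hsli] at h8
                rw [← htstar] at h8
                have h9 : tstar * (edot (m i - m i0) w).re
                    ≤ bfun m α z - (α i + edot (m i) z).re :=
                  (le_div_iff₀ hsli).mp h8
                nlinarith [h9]
              · push_neg at hsli
                have h9 : tstar * (edot (m i - m i0) w).re ≤ 0 :=
                  mul_nonpos_of_nonneg_of_nonpos htpos.le hsli
                nlinarith [h9]
          · have h5 : (α i0 + edot (m i0) z').re = bfun m α z + tstar * c0 := by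
              rw [hRs i0, hsl i0, hw0' i0 hi0mem, hi0]; ring
            rw [← h5]
            exact hble i0 z'
        have hsubI : Iset m α z ⊆ Iset m α z' := by
          intro i hi
          have h5 : (α i + edot (m i) z).re = bfun m α z := hi
          show (α i + edot (m i) z').re = bfun m α z'
          rw [hbz', hRs i, hsl i, hw0' i hi, h5]; ring
        obtain ⟨i1, hi1Tc, hi1val⟩ := Finset.exists_mem_eq_inf' hTcne tfn
        have hi1not : i1 ∉ Iset m α z := by simpa [hTc] using hi1Tc
        have hi1new : i1 ∈ Iset m α z' := by
          by_cases hsli : 0 < (edot (m i1 - m i0) w).re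
          · show (α i1 + edot (m i1) z').re = bfun m α z'
            rw [hbz', hRs i1, hsl i1]
            have ht1 : tstar = (bfun m α z - (α i1 + edot (m i1) z).re)
                / (edot (m i1 - m i0) w).re := by
              rw [htstar, hi1val, htfn]; dsimp only; rw [if_pos hsli]
            have ht2 : tstar * (edot (m i1 - m i0) w).re
                = bfun m α z - (α i1 + edot (m i1) z).re := by
              rw [ht1]
              exact div_mul_cancel₀ _ (ne_of_gt hsli)
            linear_combination ht2
          · exfalso
            have ht1 : tstar = (bfun m α z - (α istar + edot (m istar) z).re) + 1 := by
              rw [htstar, hi1val, htfn]; dsimp only; rw [if_neg hsli]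
            linarith
        have hncard : s + 1 ≤ (Iset m α z').ncard := by
          have hsub2 : insert i1 (Iset m α z) ⊆ Iset m α z' :=
            Set.insert_subset hi1new hsubI
          calc s + 1 ≤ (Iset m α z).ncard + 1 := by omega
            _ = (insert i1 (Iset m α z)).ncard :=
                (Set.ncard_insert_of_notMem hi1not (Set.toFinite _)).symm
            _ ≤ (Iset m α z').ncard := Set.ncard_le_ncard hsub2 (Set.toFinite _)
        have hslb : ∀ i : Fin (l+1), |(edot (m i) w).re| ≤ M*K := by
          intro i
          calc |(edot (m i) w).re| ≤ ‖edot (m i) w‖ := Complex.abs_re_le_norm _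
            _ ≤ ‖m i‖ * ‖w‖ := abs_edot_le _ _
            _ ≤ M*K := mul_le_mul (hMi i) (hwK _) (norm_nonneg _) (by linarith)
        have hmove : ∀ i, |(α i + edot (m i) z').re - (α i + edot (m i) z).re|
            ≤ f W * (M*K) := by
          intro i
          rw [hRs i, add_sub_cancel_left, abs_mul, abs_of_pos htpos]
          exact mul_le_mul htfW.le (hslb i) (abs_nonneg _) hfW.le
        have hbshift : |bfun m α z' - bfun m α z| ≤ f W * (M*K) := by
          rw [hbz', add_sub_cancel_left, abs_mul, abs_of_pos htpos]
          have h5 : |c0| ≤ M*K := hslb i0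
          exact mul_le_mul htfW.le h5 (abs_nonneg _) hfW.le
        have hgW : gsc^[s+1] (lam j) = 3*W + (4*M*K+4)*(f W + 1) := by
          rw [Function.iterate_succ_apply', ← hW, hgsc]
        have hMKf : 0 ≤ f W * (M*K) := mul_nonneg hfW.le hMK0.le
        have hP4 : 2*(f W*(M*K)) + W ≤ 3*W + (4*M*K+4)*(f W+1) := by
          nlinarith [mul_nonneg hMK0.le hfW.le, hfW.le, hWpos.le, hMK0.le]
        have hP5 : 2*(f W*(M*K)) ≤ 4*W + 2*((4*M*K+4)*(f W+1)) := by
          nlinarith [mul_nonneg hMK0.le hfW.le, hfW.le, hWpos.le, hMK0.le]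
        refine ih (s+1) (by omega) z' ?_ ?_ hncard
        · intro i hi
          have h5 := h1 i hi
          have h6 := abs_le.mp (hmove i)
          have h7 := abs_le.mp hbshift
          rw [hgW]
          linarith [h6.1, h6.2, h7.1, h7.2]
        · intro i hi
          have h5 := h2 i hi
          have h6 := abs_le.mp (hmove i)
          have h7 := abs_le.mp hbshift
          rw [hgW]
          linarith [h6.1, h6.2, h7.1, h7.2]
  have hTRH : TotallyRealSet m H := by
    refine CORE ((l+1)+1) 0 (by omega) p ?_ ?_ (by omega)
    · intro i hi
      rw [Function.iterate_zero_apply]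
      exact hi
    · intro i hi
      rw [Function.iterate_zero_apply]
      have := hTail i hi
      linarith
  -- ====================== final estimate ======================
  set u : Fin (l+1) → ℂ := fun i => Complex.exp (α i + edot (m i) p - (bfun m α p : ℂ))
    with hu
  have habs : ∀ i, ‖u i‖
      = Real.exp ((α i + edot (m i) p).re - bfun m α p) := by
    intro i
    rw [hu]
    dsimp only
    rw [Complex.norm_exp]
    simp [Complex.sub_re]
  have hu0 : ‖u i₀‖ = 1 := by
    rw [habs, hi₀, sub_self, Real.exp_zero]
  set HFf : Finset (Fin (l+1)) := Finset.univ.filter (fun i => i ∈ H) with hHFf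
  have hHFcoe : (↑HFf : Set (Fin (l+1))) = H := by
    ext i; simp [hHFf]
  have hTRHF : TotallyRealSet m (↑HFf : Set (Fin (l+1))) := by
    rw [hHFcoe]; exact hTRH
  have hi₀HF : i₀ ∈ HFf := by simp [hHFf, hi₀H]
  -- identities for the full sums
  have hSid : ∑ i, u i = Complex.exp (-(bfun m α p : ℂ)) * expSum m α p := by
    rw [expSum, Finset.mul_sum]
    refine Finset.sum_congr rfl fun i _ => ?_
    rw [hu]
    dsimp only
    rw [sub_eq_add_neg, add_comm, Complex.exp_add]
  have hSabs : ‖∑ i, u i‖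
      = Real.exp (-(bfun m α p)) * ‖expSum m α p‖ := by
    rw [hSid, norm_mul]
    congr 1
    rw [Complex.norm_exp]
    simp
  have hGid : ∑ i, u i • (m i) = Real.exp (-(bfun m α p)) • gradExpSum m α p := by
    ext k
    have h1 : (∑ i, u i • (m i)) k = ∑ i, u i * m i k := by
      rw [WithLp.ofLp_sum, Finset.sum_apply]
      exact Finset.sum_congr rfl fun c _ => rfl
    have h2 : (Real.exp (-(bfun m α p)) • gradExpSum m α p) k
        = (Real.exp (-(bfun m α p)) : ℂ) * ∑ i', Complex.exp (α i' + edot (m i') p) * m i' k := by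
      simp [gradExpSum, Complex.real_smul]
    rw [h1, h2, Finset.mul_sum]
    refine Finset.sum_congr rfl fun i _ => ?_
    rw [hu]
    dsimp only
    rw [sub_eq_add_neg, Complex.exp_add]
    rw [Complex.ofReal_exp, Complex.ofReal_neg]
    ring
  have hGnorm : ‖∑ i, u i • (m i)‖ = Real.exp (-(bfun m α p)) * ‖gradExpSum m α p‖ := by
    rw [hGid, norm_smul, Real.norm_eq_abs, abs_of_pos (Real.exp_pos _)]
  -- splitting into cluster and tail
  have hSsplit := Finset.sum_filter_add_sum_filter_not Finset.univ (fun i => i ∈ H) u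
  have hGsplit := Finset.sum_filter_add_sum_filter_not Finset.univ (fun i => i ∈ H)
    (fun i => u i • (m i))
  have htail1 : ∀ i, i ∉ H → ‖u i‖ ≤ Real.exp (-lam0) := by
    intro i hi
    rw [habs i]
    apply Real.exp_le_exp.mpr
    have h1 := hTail i hi
    have h2 : lam0 ≤ lam (j+1) := hlamge _
    linarith
  have hcardle : ((Finset.univ.filter (fun i => ¬ i ∈ H)).card : ℝ) ≤ ((l:ℝ)+1) := by
    have h1 : (Finset.univ.filter (fun i => ¬ i ∈ H)).card ≤ l+1 := by
      calc (Finset.univ.filter (fun i => ¬ i ∈ H)).card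
          ≤ (Finset.univ : Finset (Fin (l+1))).card := Finset.card_filter_le _ _
        _ = l+1 := by simp
    calc ((Finset.univ.filter (fun i => ¬ i ∈ H)).card : ℝ) ≤ ((l+1 : ℕ) : ℝ) :=
          Nat.cast_le.mpr h1
      _ = (l:ℝ)+1 := by push_cast; ring
  have hScb : ‖∑ i ∈ Finset.univ.filter (fun i => ¬ i ∈ H), u i‖
      ≤ ((l:ℝ)+1) * Real.exp (-lam0) := by
    calc ‖∑ i ∈ Finset.univ.filter (fun i => ¬ i ∈ H), u i‖
        ≤ ∑ i ∈ Finset.univ.filter (fun i => ¬ i ∈ H), ‖u i‖ :=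
          norm_sum_le _ _
      _ ≤ ∑ i ∈ Finset.univ.filter (fun i => ¬ i ∈ H), Real.exp (-lam0) := by
          refine Finset.sum_le_sum fun i hi => htail1 i ?_
          simpa using (Finset.mem_filter.mp hi).2
      _ = ((Finset.univ.filter (fun i => ¬ i ∈ H)).card : ℝ) * Real.exp (-lam0) := by
          rw [Finset.sum_const, nsmul_eq_mul]
      _ ≤ ((l:ℝ)+1) * Real.exp (-lam0) :=
          mul_le_mul_of_nonneg_right hcardle (Real.exp_nonneg _)
  have hGcb : ‖∑ i ∈ Finset.univ.filter (fun i => ¬ i ∈ H), u i • (m i)‖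
      ≤ ((l:ℝ)+1) * Real.exp (-lam0) * M := by
    calc ‖∑ i ∈ Finset.univ.filter (fun i => ¬ i ∈ H), u i • (m i)‖
        ≤ ∑ i ∈ Finset.univ.filter (fun i => ¬ i ∈ H), ‖u i • (m i)‖ :=
          norm_sum_le _ _
      _ ≤ ∑ i ∈ Finset.univ.filter (fun i => ¬ i ∈ H), Real.exp (-lam0) * M := by
          refine Finset.sum_le_sum fun i hi => ?_
          rw [norm_smul]
          refine mul_le_mul (htail1 i ?_) (hMi i) (norm_nonneg _) (Real.exp_nonneg _)
          simpa using (Finset.mem_filter.mp hi).2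
      _ = ((Finset.univ.filter (fun i => ¬ i ∈ H)).card : ℝ) * (Real.exp (-lam0) * M) := by
          rw [Finset.sum_const, nsmul_eq_mul]
      _ ≤ ((l:ℝ)+1) * (Real.exp (-lam0) * M) := by
          refine mul_le_mul_of_nonneg_right hcardle ?_
          have : (0:ℝ) ≤ M := by linarith
          positivity
      _ = ((l:ℝ)+1) * Real.exp (-lam0) * M := by ring
  -- the cluster sums
  set SH : ℂ := ∑ i ∈ HFf, u i with hSH
  set GH : ESp n := ∑ i ∈ HFf, u i • (m i) with hGH
  set Rel : ESp n := ∑ i ∈ HFf.erase i₀, u i • (m i - m i₀) with hRel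
  have hrel : GH - SH • (m i₀) = Rel := by
    rw [hSH, hGH, hRel, Finset.sum_smul, ← Finset.sum_sub_distrib]
    rw [Finset.sum_congr rfl (fun i (_ : i ∈ HFf) => (smul_sub (u i) (m i) (m i₀)).symm)]
    exact (Finset.sum_erase _ (by simp)).symm
  -- totally real lower bound
  have hkey : ∀ i ∈ HFf.erase i₀, σ * ‖u i‖ ≤ 2 * ‖Rel‖ := by
    intro i hi
    obtain ⟨hne, hmem⟩ := Finset.mem_erase.mp hi
    have hmem' : i ∈ (↑HFf : Set (Fin (l+1))) := hmem
    set cc : {i : Fin (l+1) // i ∈ (↑HFf : Set (Fin (l+1))) ∧ i ≠ i₀} × Bool → ℝ :=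
      fun q => if q.2 then (u q.1.1).im else (u q.1.1).re with hcc
    have hccsum : ∑ q : {i : Fin (l+1) // i ∈ (↑HFf : Set (Fin (l+1))) ∧ i ≠ i₀} × Bool,
        cc q • (if q.2 then Complex.I • (m q.1.1 - m i₀) else m q.1.1 - m i₀) = Rel := by
      rw [Fintype.sum_prod_type]
      have h1 : ∀ x : {i : Fin (l+1) // i ∈ (↑HFf : Set (Fin (l+1))) ∧ i ≠ i₀},
          (∑ bo : Bool, cc (x, bo) •
            (if bo then Complex.I • (m x.1 - m i₀) else m x.1 - m i₀))
            = u x.1 • (m x.1 - m i₀) := by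
        intro x
        rw [Fintype.sum_bool]
        rw [hcc]
        dsimp only
        rw [smul_decomp (u x.1) (m x.1 - m i₀)]
        rw [add_comm]; rfl
      rw [Finset.sum_congr rfl (fun x _ => h1 x)]
      rw [hRel]
      rw [← Finset.sum_subtype (HFf.erase i₀)
        (fun x => by simp [Finset.mem_erase, Finset.mem_coe, and_comm])
        (fun i => u i • (m i - m i₀))]
    have h2 := hσspec HFf i₀ hTRHF hi₀HF cc (⟨i, hmem', hne⟩, false)
    have h3 := hσspec HFf i₀ hTRHF hi₀HF cc (⟨i, hmem', hne⟩, true)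
    rw [hccsum] at h2 h3
    have h4 : cc (⟨i, hmem', hne⟩, false) = (u i).re := by simp [hcc]
    have h5 : cc (⟨i, hmem', hne⟩, true) = (u i).im := by simp [hcc]
    rw [h4, Real.norm_eq_abs] at h2
    rw [h5, Real.norm_eq_abs] at h3
    have h6 : ‖u i‖ ≤ |(u i).re| + |(u i).im| :=
      Complex.norm_le_abs_re_add_abs_im _
    nlinarith [h2, h3, hσpos]
  have hA0 : 0 ≤ ‖SH‖ := norm_nonneg _
  have hB0 : 0 ≤ ‖GH‖ := norm_nonneg _
  have hRel0 : 0 ≤ ‖Rel‖ := norm_nonneg _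
  have hL10 : (0:ℝ) ≤ (l:ℝ)+1 := by positivity
  have hRelb : ‖Rel‖ ≤ ‖GH‖ + ‖SH‖ * M := by
    rw [← hrel]
    calc ‖GH - SH • (m i₀)‖ ≤ ‖GH‖ + ‖SH • (m i₀)‖ := norm_sub_le _ _
      _ ≤ ‖GH‖ + ‖SH‖ * M := by
          rw [norm_smul]
          exact add_le_add_right (mul_le_mul_of_nonneg_left (hMi i₀) (norm_nonneg _)) _
  have hcarde : ((HFf.erase i₀).card : ℝ) ≤ (l:ℝ)+1 := by
    have h1 : (HFf.erase i₀).card ≤ l+1 := by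
      calc (HFf.erase i₀).card ≤ HFf.card := Finset.card_erase_le
        _ ≤ (Finset.univ : Finset (Fin (l+1))).card := Finset.card_le_card (Finset.subset_univ _)
        _ = l+1 := by simp
    calc ((HFf.erase i₀).card : ℝ) ≤ ((l+1 : ℕ) : ℝ) := Nat.cast_le.mpr h1
      _ = (l:ℝ)+1 := by push_cast; ring
  have hsumerase : σ * (∑ i ∈ HFf.erase i₀, ‖u i‖)
      ≤ ((l:ℝ)+1) * (2 * ‖Rel‖) := by
    rw [Finset.mul_sum]
    calc ∑ i ∈ HFf.erase i₀, σ * ‖u i‖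
        ≤ ∑ i ∈ HFf.erase i₀, 2 * ‖Rel‖ := Finset.sum_le_sum hkey
      _ = ((HFf.erase i₀).card : ℝ) * (2 * ‖Rel‖) := by rw [Finset.sum_const, nsmul_eq_mul]
      _ ≤ ((l:ℝ)+1) * (2 * ‖Rel‖) := by
          refine mul_le_mul_of_nonneg_right hcarde (by positivity)
  have hSHsplit : SH = u i₀ + ∑ i ∈ HFf.erase i₀, u i := by
    rw [hSH, Finset.add_sum_erase _ u hi₀HF]
  have hG1 : σ ≤ σ * ‖SH‖ + σ * (∑ i ∈ HFf.erase i₀, ‖u i‖) := by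
    have h1 : ‖u i₀‖ ≤ ‖SH‖ + ∑ i ∈ HFf.erase i₀, ‖u i‖ := by
      have h2 : u i₀ = SH - ∑ i ∈ HFf.erase i₀, u i := by rw [hSHsplit]; ring
      calc ‖u i₀‖ = ‖SH - ∑ i ∈ HFf.erase i₀, u i‖ := by rw [← h2]
        _ ≤ ‖SH‖ + ‖∑ i ∈ HFf.erase i₀, u i‖ := by
            have := norm_sub_le SH (∑ i ∈ HFf.erase i₀, u i)
            simpa using this
        _ ≤ ‖SH‖ + ∑ i ∈ HFf.erase i₀, ‖u i‖ :=
            add_le_add_right (norm_sum_le _ _) _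
    rw [hu0] at h1
    nlinarith [hσpos]
  have hG1' : σ ≤ σ * ‖SH‖ + ((l:ℝ)+1) * (2 * ‖Rel‖) := by linarith
  have hσK₀ : σ * K₀ = σ + 2*((l:ℝ)+1)*(M+1) := by
    rw [hK₀]
    field_simp
  have hG2 : σ ≤ σ * K₀ * (‖SH‖ + ‖GH‖) := by
    rw [hσK₀]
    nlinarith [hG1', hRelb, hA0, hB0, hL10, hM1, hσpos, mul_nonneg hL10 hA0,
      mul_nonneg hL10 hB0, mul_nonneg (mul_nonneg hL10 hA0) (by linarith : (0:ℝ) ≤ M)]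
  have hG3 : 1 ≤ K₀ * (‖SH‖ + ‖GH‖) := by
    have h1 : σ * 1 ≤ σ * (K₀ * (‖SH‖ + ‖GH‖)) := by
      rw [mul_one, ← mul_assoc]; exact hG2
    exact le_of_mul_le_mul_left h1 hσpos
  -- compare with the full sums
  have hSHb : ‖SH‖
      ≤ Real.exp (-(bfun m α p)) * ‖expSum m α p‖
        + ((l:ℝ)+1) * Real.exp (-lam0) := by
    have h1 : SH = (∑ i, u i) - ∑ i ∈ Finset.univ.filter (fun i => ¬ i ∈ H), u i := by
      rw [hSH, ← hSsplit, hHFf]; ring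
    calc ‖SH‖
        = ‖(∑ i, u i) - ∑ i ∈ Finset.univ.filter (fun i => ¬ i ∈ H), u i‖ := by
          rw [← h1]
      _ ≤ ‖∑ i, u i‖
          + ‖∑ i ∈ Finset.univ.filter (fun i => ¬ i ∈ H), u i‖ := by
          have := norm_sub_le (∑ i, u i)
            (∑ i ∈ Finset.univ.filter (fun i => ¬ i ∈ H), u i)
          simpa using this
      _ ≤ Real.exp (-(bfun m α p)) * ‖expSum m α p‖
          + ((l:ℝ)+1) * Real.exp (-lam0) := by
          rw [hSabs]
          exact add_le_add_right hScb _
  have hGHb : ‖GH‖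
      ≤ Real.exp (-(bfun m α p)) * ‖gradExpSum m α p‖
        + ((l:ℝ)+1) * Real.exp (-lam0) * M := by
    have h1 : GH = (∑ i, u i • (m i))
        - ∑ i ∈ Finset.univ.filter (fun i => ¬ i ∈ H), u i • (m i) := by
      rw [hGH, ← hGsplit, hHFf]; abel
    calc ‖GH‖ = ‖(∑ i, u i • (m i))
        - ∑ i ∈ Finset.univ.filter (fun i => ¬ i ∈ H), u i • (m i)‖ := by rw [← h1]
      _ ≤ ‖∑ i, u i • (m i)‖
          + ‖∑ i ∈ Finset.univ.filter (fun i => ¬ i ∈ H), u i • (m i)‖ := norm_sub_le _ _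
      _ ≤ Real.exp (-(bfun m α p)) * ‖gradExpSum m α p‖
          + ((l:ℝ)+1) * Real.exp (-lam0) * M := by
          rw [hGnorm]
          exact add_le_add_right hGcb _
  -- conclusion
  set R0 : ℝ := Real.exp (-(bfun m α p)) *
    (‖expSum m α p‖ + ‖gradExpSum m α p‖) with hR0
  have hG4 : ‖SH‖ + ‖GH‖ ≤ R0 + ((l:ℝ)+1) * Real.exp (-lam0) * (1+M) := by
    rw [hR0]
    have : Real.exp (-(bfun m α p)) *
        (‖expSum m α p‖ + ‖gradExpSum m α p‖)
        = Real.exp (-(bfun m α p)) * ‖expSum m α p‖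
          + Real.exp (-(bfun m α p)) * ‖gradExpSum m α p‖ := by ring
    rw [this]
    linarith [hSHb, hGHb]
  have hK₀0 : (0:ℝ) ≤ K₀ := by linarith
  have hG5 : K₀ * (‖SH‖ + ‖GH‖)
      ≤ K₀ * R0 + ((l:ℝ)+1) * Real.exp (-lam0) * (1+M) * K₀ := by
    calc K₀ * (‖SH‖ + ‖GH‖)
        ≤ K₀ * (R0 + ((l:ℝ)+1) * Real.exp (-lam0) * (1+M)) :=
          mul_le_mul_of_nonneg_left hG4 hK₀0
      _ = K₀ * R0 + ((l:ℝ)+1) * Real.exp (-lam0) * (1+M) * K₀ := by ring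
  clear_value SH GH Rel R0 K₀ lam0
  have hG7 : 1/2 ≤ K₀ * R0 := by
    have h1 : ((l:ℝ)+1) * Real.exp (-lam0) * (1+M) * K₀ ≤ 1/2 := hlam0exp
    nlinarith [hG3, hG5, h1]
  have hfinal : 1 ≤ 2*K₀ * R0 := by nlinarith [hG7]
  have h2K : (0:ℝ) < 2*K₀ := by linarith
  calc (2*K₀)⁻¹ = (2*K₀)⁻¹ * 1 := by ring
    _ ≤ (2*K₀)⁻¹ * (2*K₀ * R0) := by
        exact mul_le_mul_of_nonneg_left hfinal (by positivity)
    _ = R0 := by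
        rw [← mul_assoc, inv_mul_cancel₀ (ne_of_gt h2K), one_mul]
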